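/- Let $\sigma \in (1,2)$ and let $Q(w) = \frac{1}{\sigma-1} w^{\sigma-2} - \int_0^w (z+1)^{-\sigma}(w-z)^{\sigma-2}\,dz$ for $w > 0$. Then $Q(w) > 0$ for every $w > 0$. -/

import Mathlib

open MeasureTheory Set intervalIntegral Filter

lemma key_integrable (σ w : ℝ) (h1 : 1 < σ) (h2 : σ < 2) (hw : 0 < w) :
    IntervalIntegrable (fun z => (z + 1) ^ (-σ) * (w - z) ^ (σ - 2)) volume 0 w := by
  have A : IntervalIntegrable (fun z : ℝ => (w - z) ^ (σ - 2)) volume 0 w := by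
    have := (intervalIntegral.intervalIntegrable_rpow' (a := 0) (b := w)
      (r := σ - 2) (by linarith)).comp_sub_left w
    simpa using this.symm
  refine A.continuousOn_mul ?_
  apply ContinuousOn.rpow_const
  · exact (continuousOn_id.add continuousOn_const)
  · intro x hx
    rw [uIcc_of_le hw.le] at hx
    exact Or.inl (by nlinarith [hx.1])

lemma key_eval (σ w : ℝ) (h1 : 1 < σ) (h2 : σ < 2) (hw : 0 < w) :
    (∫ z in (0:ℝ)..w, (z + 1) ^ (-σ) * (w - z) ^ (σ - 2))
      = w ^ (σ - 1) / ((σ - 1) * (w + 1)) := by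
  set c : ℝ := (1 - σ) * (w + 1) with hc
  have hcne : c ≠ 0 := by
    have : (1 : ℝ) - σ < 0 := by linarith
    exact mul_ne_zero this.ne (by linarith)
  set f : ℝ → ℝ := fun z => c⁻¹ * ((z + 1) ^ (1 - σ) * (w - z) ^ (σ - 1)) with hf
  have hderiv : ∀ z ∈ Ioo (0:ℝ) w,
      HasDerivAt f ((z + 1) ^ (-σ) * (w - z) ^ (σ - 2)) z := by
    intro z hz
    have hz1 : (0:ℝ) < z + 1 := by linarith [hz.1]
    have hz2 : (0:ℝ) < w - z := by linarith [hz.2]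
    have d1 : HasDerivAt (fun z : ℝ => (z + 1) ^ (1 - σ))
        (1 * (1 - σ) * (z + 1) ^ (1 - σ - 1)) z :=
      ((hasDerivAt_id z).add_const 1).rpow_const (Or.inl hz1.ne')
    have d2 : HasDerivAt (fun z : ℝ => (w - z) ^ (σ - 1))
        ((-1) * (σ - 1) * (w - z) ^ (σ - 1 - 1)) z := by
      have := ((hasDerivAt_const z w).sub (hasDerivAt_id z)).rpow_const
        (p := σ - 1) (Or.inl (show w - id z ≠ 0 by simpa using hz2.ne'))
      simpa using this
    have := ((d1.mul d2).const_mul c⁻¹)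
    refine this.congr_deriv ?_
    have e1 : (z + 1) ^ (1 - σ) = (z + 1) * (z + 1) ^ (-σ) := by
      rw [← Real.rpow_one_add' hz1.le (by intro h; linarith)]
      ring_nf
    have e2 : (w - z) ^ (σ - 1) = (w - z) * (w - z) ^ (σ - 2) := by
      rw [← Real.rpow_one_add' hz2.le (by intro h; linarith)]
      ring_nf
    have e3 : (1 : ℝ) - σ - 1 = -σ := by ring
    have e4 : σ - 1 - 1 = σ - 2 := by ring
    rw [e3, e4, e1, e2]
    field_simp [hc]
    ring
  have hint := key_integrable σ w h1 h2 hw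
  have ha : Tendsto f (nhdsWithin 0 (Ioi 0)) (nhds (c⁻¹ * w ^ (σ - 1))) := by
    have hcont : ContinuousAt f 0 := by
      apply ContinuousAt.mul continuousAt_const
      apply ContinuousAt.mul
      · exact (ContinuousAt.add continuousAt_id continuousAt_const).rpow_const
          (Or.inl (by norm_num))
      · exact (ContinuousAt.sub continuousAt_const continuousAt_id).rpow_const
          (Or.inl (by simpa using hw.ne'))
    have h0 : f 0 = c⁻¹ * w ^ (σ - 1) := by simp [hf]
    rw [← h0]
    exact hcont.continuousWithinAt.tendsto
  have hb : Tendsto f (nhdsWithin w (Iio w)) (nhds 0) := by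
    have hcont : ContinuousAt f w := by
      apply ContinuousAt.mul continuousAt_const
      apply ContinuousAt.mul
      · refine (ContinuousAt.add continuousAt_id continuousAt_const).rpow_const (Or.inl ?_)
        intro h; simp only [Pi.add_apply, id_eq] at h; linarith
      · exact (ContinuousAt.sub continuousAt_const continuousAt_id).rpow_const
          (Or.inr (by linarith))
    have h0 : f w = 0 := by
      simp [hf, Real.zero_rpow (show σ - 1 ≠ 0 by linarith)]
    rw [← h0]
    exact hcont.continuousWithinAt.tendsto
  have := intervalIntegral.integral_eq_sub_of_hasDerivAt_of_tendsto hw hderiv hint ha hb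
  rw [this, hc]
  have hs : σ - 1 ≠ 0 := by intro h; linarith
  have h1s : (1:ℝ) - σ ≠ 0 := by intro h; linarith
  have hw1 : w + 1 ≠ 0 := by intro h; linarith
  generalize w ^ (σ - 1) = A
  field_simp
  ring

open Set in
/-- For `σ ∈ (1,2)` and
`Q(w) = (1/(σ-1)) w^{σ-2} - ∫_0^w (z+1)^{-σ} (w-z)^{σ-2} dz`, one has `Q(w) > 0` for all `w > 0`. -/
theorem stmt2 (σ : ℝ) (hσ : σ ∈ Ioo (1:ℝ) 2) (w : ℝ) (hw : 0 < w) :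
    0 < (1 / (σ - 1)) * w ^ (σ - 2)
        - ∫ z in (0:ℝ)..w, (z + 1) ^ (-σ) * (w - z) ^ (σ - 2) := by
  obtain ⟨h1, h2⟩ := hσ
  rw [key_eval σ w h1 h2 hw]
  have hpow : w ^ (σ - 1) = w ^ (σ - 2) * w := by
    rw [← Real.rpow_add_one hw.ne']; ring_nf
  rw [hpow]
  have hp : (0:ℝ) < w ^ (σ - 2) := Real.rpow_pos_of_pos hw _
  have hs : σ - 1 ≠ 0 := by intro h; linarith
  have hw1 : w + 1 ≠ 0 := by intro h; linarith
  have hkey : (1 / (σ - 1)) * w ^ (σ - 2) - w ^ (σ - 2) * w / ((σ - 1) * (w + 1))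
      = w ^ (σ - 2) / ((σ - 1) * (w + 1)) := by
    field_simp
    ring
  rw [hkey]
  have : (0:ℝ) < (σ - 1) * (w + 1) := by nlinarith
  positivity
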